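/- arXiv:1105.1944 — 2 statements merged into one kernel-verified Lean document; each statement's English description precedes it below -/
import Mathlib

section
/- Let J : [0,1] → ℝ solve J''(s) = κ(s)² J(s) with J(0) = 0, J'(1) = 1, J(s) > 0 for s ∈ (0,1], where κ is continuous. Set ϱ = ∫₀¹ s κ(s)² ds. Then J'(0) ≥ e^{-ϱ}/(1+ϱ). -/
open MeasureTheory intervalIntegral

theorem stmt_13 (κ J J' : ℝ → ℝ)
    (hκc : ContinuousOn κ (Set.Icc 0 1))
    (hd1 : ∀ s ∈ Set.Icc (0:ℝ) 1, HasDerivWithinAt J (J' s) (Set.Icc 0 1) s)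
    (hd2 : ∀ s ∈ Set.Icc (0:ℝ) 1, HasDerivWithinAt J' (κ s ^ 2 * J s) (Set.Icc 0 1) s)
    (hJ0 : J 0 = 0) (hJ'1 : J' 1 = 1)
    (hJpos : ∀ s ∈ Set.Ioc (0:ℝ) 1, 0 < J s) :
    Real.exp (-(∫ s in (0:ℝ)..1, s * κ s ^ 2)) / (1 + ∫ s in (0:ℝ)..1, s * κ s ^ 2) ≤ J' 0 := by
  have hJc : ContinuousOn J (Set.Icc 0 1) := fun s hs => (hd1 s hs).continuousWithinAt
  have hJ'c : ContinuousOn J' (Set.Icc 0 1) := fun s hs => (hd2 s hs).continuousWithinAt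
  have hJnn : ∀ s ∈ Set.Icc (0:ℝ) 1, 0 ≤ J s := by
    intro s hs
    rcases eq_or_lt_of_le hs.1 with h | h
    · simp [← h, hJ0]
    · exact (hJpos s ⟨h, hs.2⟩).le
  set W : ℝ → ℝ := fun s => s * J' s - J s with hWdef
  have hWd : ∀ s ∈ Set.Icc (0:ℝ) 1, HasDerivWithinAt W (s * (κ s ^ 2 * J s)) (Set.Icc 0 1) s := by
    intro s hs
    have h1 := ((hasDerivWithinAt_id s (Set.Icc 0 1)).mul (hd2 s hs)).sub (hd1 s hs)
    convert h1 using 1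
    · rfl
    · rfl
    · rfl
    simp only [id_eq]; ring
  have hWc : ContinuousOn W (Set.Icc 0 1) := fun s hs => (hWd s hs).continuousWithinAt
  have hWmono : MonotoneOn W (Set.Icc 0 1) := by
    apply monotoneOn_of_hasDerivWithinAt_nonneg (convex_Icc 0 1) hWc
      (f' := fun s => s * (κ s ^ 2 * J s))
    · intro x hx
      rw [interior_Icc] at hx ⊢
      exact ((hWd x (Set.Ioo_subset_Icc_self hx)).hasDerivAt
        (Icc_mem_nhds hx.1 hx.2)).hasDerivWithinAt
    · intro x hx
      rw [interior_Icc] at hx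
      exact mul_nonneg hx.1.le (mul_nonneg (sq_nonneg _) (hJnn x (Set.Ioo_subset_Icc_self hx)))
  have hWnn : ∀ s ∈ Set.Icc (0:ℝ) 1, 0 ≤ W s := by
    intro s hs
    have := hWmono ⟨le_rfl, zero_le_one⟩ hs hs.1
    simpa [hWdef, hJ0] using this
  have hgmono : ∀ t s : ℝ, 0 < t → t ≤ s → s ≤ 1 → J t / t ≤ J s / s := by
    intro t s ht hts hs1
    have hsub : Set.Icc t 1 ⊆ Set.Icc 0 1 := Set.Icc_subset_Icc ht.le le_rfl
    have hmono : MonotoneOn (fun u => J u / u) (Set.Icc t 1) := by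
      apply monotoneOn_of_hasDerivWithinAt_nonneg (convex_Icc t 1)
        ((hJc.mono hsub).div (continuousOn_id) (fun u hu => (lt_of_lt_of_le ht hu.1).ne'))
        (f' := fun u => (J' u * u - J u * 1) / u ^ 2)
      · intro x hx
        rw [interior_Icc] at hx ⊢
        have hx0 : (0:ℝ) < x := lt_of_lt_of_le ht hx.1.le
        have hJx : HasDerivAt J (J' x) x :=
          (hd1 x (hsub (Set.Ioo_subset_Icc_self hx))).hasDerivAt
            (Icc_mem_nhds hx0 hx.2)
        exact ((hJx.div (hasDerivAt_id x) hx0.ne').hasDerivWithinAt)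
      · intro x hx
        rw [interior_Icc] at hx
        have hx0 : (0:ℝ) < x := lt_of_lt_of_le ht hx.1.le
        have hw := hWnn x ⟨hx0.le, hx.2.le⟩
        apply div_nonneg _ (sq_nonneg x)
        simpa [hWdef, mul_comm] using hw
    exact hmono (Set.left_mem_Icc.2 (hts.trans hs1)) ⟨hts, hs1⟩ hts
  -- Part 2: FTC for W and bound via K
  have hcontWint : ContinuousOn (fun t => t * (κ t ^ 2 * J t)) (Set.Icc 0 1) :=
    continuousOn_id.mul ((hκc.pow 2).mul hJc)
  have hWftc : ∀ s ∈ Set.Ioc (0:ℝ) 1, W s = ∫ t in (0:ℝ)..s, t * (κ t ^ 2 * J t) := by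
    intro s hs
    have hIcc : Set.Icc (0:ℝ) s ⊆ Set.Icc 0 1 := Set.Icc_subset_Icc le_rfl hs.2
    have h := integral_eq_sub_of_hasDerivAt_of_le hs.1.le (hWc.mono hIcc)
      (fun t ht => (hWd t (hIcc (Set.Ioo_subset_Icc_self ht))).hasDerivAt
        (Icc_mem_nhds ht.1 (lt_of_lt_of_le ht.2 hs.2)))
      ((hcontWint.mono hIcc).intervalIntegrable_of_Icc hs.1.le)
    have hW0 : W 0 = 0 := by simp [hWdef, hJ0]
    rw [hW0, sub_zero] at h
    exact h.symm
  set K : ℝ → ℝ := fun x => ∫ t in (0:ℝ)..x, t ^ 2 * κ t ^ 2 with hKdef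
  have hcontK2 : ContinuousOn (fun t : ℝ => t ^ 2 * κ t ^ 2) (Set.Icc 0 1) :=
    (continuousOn_id.pow 2).mul (hκc.pow 2)
  have hWleK : ∀ s ∈ Set.Ioc (0:ℝ) 1, W s ≤ J s / s * K s := by
    intro s hs
    have hIcc : Set.Icc (0:ℝ) s ⊆ Set.Icc 0 1 := Set.Icc_subset_Icc le_rfl hs.2
    have hptw : ∀ t ∈ Set.Icc (0:ℝ) s, t * (κ t ^ 2 * J t) ≤ J s / s * (t ^ 2 * κ t ^ 2) := by
      intro t ht
      rcases eq_or_lt_of_le ht.1 with h0 | h0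
      · simp [← h0]
      · have hJt : J t ≤ J s / s * t := by
          have := hgmono t s h0 ht.2 hs.2
          rw [div_le_div_iff₀ h0 hs.1] at this
          calc J t = J t / t * t := by field_simp
          _ ≤ J s / s * t := by
            apply mul_le_mul_of_nonneg_right _ h0.le
            rw [div_le_div_iff₀ h0 hs.1]; linarith
        calc t * (κ t ^ 2 * J t) ≤ t * (κ t ^ 2 * (J s / s * t)) := by
              apply mul_le_mul_of_nonneg_left _ h0.le
              exact mul_le_mul_of_nonneg_left hJt (sq_nonneg _)
        _ = J s / s * (t ^ 2 * κ t ^ 2) := by ring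
    rw [hWftc s hs, hKdef]
    calc (∫ t in (0:ℝ)..s, t * (κ t ^ 2 * J t))
        ≤ ∫ t in (0:ℝ)..s, J s / s * (t ^ 2 * κ t ^ 2) := by
          apply integral_mono_on hs.1.le
            ((hcontWint.mono hIcc).intervalIntegrable_of_Icc hs.1.le)
            (((continuousOn_const.mul hcontK2).mono hIcc).intervalIntegrable_of_Icc hs.1.le) hptw
    _ = J s / s * ∫ t in (0:ℝ)..s, t ^ 2 * κ t ^ 2 := integral_const_mul _ _
  -- Part 3: K's properties
  set ϱ := ∫ s in (0:ℝ)..1, s * κ s ^ 2 with hϱdef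
  have hKc : ContinuousOn K (Set.Icc 0 1) := by
    have := continuousOn_primitive_interval (a := (0:ℝ)) (b := 1) (μ := volume)
      (f := fun t => t ^ 2 * κ t ^ 2)
      (by rw [Set.uIcc_of_le zero_le_one]; exact hcontK2.integrableOn_Icc)
    rwa [Set.uIcc_of_le zero_le_one] at this
  have hKderiv : ∀ s ∈ Set.Ioo (0:ℝ) 1, HasDerivAt K (s ^ 2 * κ s ^ 2) s := by
    intro s hs
    exact integral_hasDerivAt_right
      ((hcontK2.mono (Set.Icc_subset_Icc le_rfl hs.2.le)).intervalIntegrable_of_Icc hs.1.le)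
      ⟨Set.Icc 0 1, Icc_mem_nhds hs.1 hs.2, hcontK2.aestronglyMeasurable measurableSet_Icc⟩
      (hcontK2.continuousAt (Icc_mem_nhds hs.1 hs.2))
  have hJ1pos : (0:ℝ) < J 1 := hJpos 1 ⟨zero_lt_one, le_rfl⟩
  -- Part 4: the log estimate
  have key : ∀ a ∈ Set.Ioc (0:ℝ) 1, Real.exp (-ϱ) * J 1 ≤ J a / a := by
    intro a ha
    have hsub : Set.Icc a 1 ⊆ Set.Icc 0 1 := Set.Icc_subset_Icc ha.1.le le_rfl
    have hJpos' : ∀ s ∈ Set.Icc a 1, 0 < J s := fun s hs =>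
      hJpos s ⟨lt_of_lt_of_le ha.1 hs.1, hs.2⟩
    have hspos : ∀ s ∈ Set.Icc a 1, 0 < s := fun s hs => lt_of_lt_of_le ha.1 hs.1
    have hinvc : ContinuousOn (fun s : ℝ => s⁻¹) (Set.Icc a 1) :=
      continuousOn_id.inv₀ (fun s hs => (hspos s hs).ne')
    have hcontρ : ContinuousOn (fun s => s⁻¹ * s⁻¹ * K s) (Set.Icc a 1) :=
      (hinvc.mul hinvc).mul (hKc.mono hsub)
    have hint2 : IntervalIntegrable (fun s => s⁻¹ * s⁻¹ * K s) volume a 1 :=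
      hcontρ.intervalIntegrable_of_Icc ha.2
    have hint1 : IntervalIntegrable (fun s => J' s / J s - s⁻¹) volume a 1 :=
      (((hJ'c.mono hsub).div (hJc.mono hsub) (fun s hs => (hJpos' s hs).ne')).sub
        hinvc).intervalIntegrable_of_Icc ha.2
    have hintκa1 : IntervalIntegrable (fun s => s * κ s ^ 2) volume a 1 :=
      ((continuousOn_id.mul (hκc.pow 2)).mono hsub).intervalIntegrable_of_Icc ha.2
    have hLftc := integral_eq_sub_of_hasDerivAt_of_le
      (f := fun s => Real.log (J s) - Real.log s)
      (f' := fun s => J' s / J s - s⁻¹) ha.2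
      (((hJc.mono hsub).log (fun s hs => (hJpos' s hs).ne')).sub
        (Real.continuousOn_log.mono (fun s hs => by
          simpa using (hspos s hs).ne')))
      (by
        intro s hs
        have hs' : s ∈ Set.Ioo (0:ℝ) 1 := ⟨ha.1.trans hs.1, hs.2⟩
        have hJs : HasDerivAt J (J' s) s :=
          (hd1 s (Set.Ioo_subset_Icc_self hs')).hasDerivAt (Icc_mem_nhds hs'.1 hs'.2)
        exact (hJs.log (hJpos s ⟨hs'.1, hs'.2.le⟩).ne').sub (Real.hasDerivAt_log hs'.1.ne'))
      hint1
    have hptw2 : ∀ s ∈ Set.Icc a 1, J' s / J s - s⁻¹ ≤ s⁻¹ * s⁻¹ * K s := by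
      intro s hs
      have hs0 := hspos s hs
      have hJs := hJpos' s hs
      have h1 : J' s / J s - s⁻¹ = W s / (s * J s) := by
        rw [hWdef]; field_simp
      have h2 : W s ≤ J s / s * K s := hWleK s ⟨hs0, hs.2⟩
      rw [h1]
      calc W s / (s * J s) ≤ (J s / s * K s) / (s * J s) := by
            exact div_le_div_of_nonneg_right h2 (mul_pos hs0 hJs).le
      _ = s⁻¹ * s⁻¹ * K s := by field_simp
    have hmono1 : (∫ s in a..1, (J' s / J s - s⁻¹)) ≤ ∫ s in a..1, s⁻¹ * s⁻¹ * K s :=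
      integral_mono_on ha.2 hint1 hint2 hptw2
    -- FTC for P = -( s⁻¹ K s)
    have hPftc := integral_eq_sub_of_hasDerivAt_of_le
      (f := fun s => -(s⁻¹ * K s))
      (f' := fun s => s⁻¹ * s⁻¹ * K s - s * κ s ^ 2) ha.2
      ((hinvc.mul (hKc.mono hsub)).neg)
      (by
        intro s hs
        have hs' : s ∈ Set.Ioo (0:ℝ) 1 := ⟨ha.1.trans hs.1, hs.2⟩
        have hK := hKderiv s hs'
        have hinv : HasDerivAt (fun x : ℝ => x⁻¹) (-(s ^ 2)⁻¹) s := hasDerivAt_inv hs'.1.ne'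
        have h := (hinv.mul hK).neg
        convert h using 1
        · rfl
        have hs0 : s ≠ 0 := hs'.1.ne'
        rw [show (s ^ 2)⁻¹ = s⁻¹ * s⁻¹ by ring, show s⁻¹ * (s ^ 2 * κ s ^ 2) = s * κ s ^ 2 by
          rw [pow_two s, mul_assoc s s, ← mul_assoc s⁻¹, inv_mul_cancel₀ hs0, one_mul]]
        ring)
      ((hcontρ.sub ((continuousOn_id.mul (hκc.pow 2)).mono hsub)).intervalIntegrable_of_Icc ha.2)
    have hsplitP : (∫ s in a..1, s⁻¹ * s⁻¹ * K s) - (∫ s in a..1, s * κ s ^ 2)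
        = -(1⁻¹ * K 1) - -(a⁻¹ * K a) := by
      rw [← intervalIntegral.integral_sub hint2 hintκa1]
      exact hPftc
    have hKa : a⁻¹ * K a ≤ ∫ t in (0:ℝ)..a, t * κ t ^ 2 := by
      have hIcc : Set.Icc (0:ℝ) a ⊆ Set.Icc 0 1 := Set.Icc_subset_Icc le_rfl ha.2
      have h1 : K a ≤ ∫ t in (0:ℝ)..a, a * (t * κ t ^ 2) := by
        apply integral_mono_on ha.1.le
          ((hcontK2.mono hIcc).intervalIntegrable_of_Icc ha.1.le)
          (((continuousOn_const.mul (continuousOn_id.mul (hκc.pow 2))).mono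
            hIcc).intervalIntegrable_of_Icc ha.1.le)
        intro t ht
        simp only [Pi.mul_apply, Pi.pow_apply, id_eq]
        nlinarith [mul_le_mul_of_nonneg_right
          (mul_le_mul_of_nonneg_right ht.2 ht.1) (sq_nonneg (κ t))]
      rw [intervalIntegral.integral_const_mul] at h1
      calc a⁻¹ * K a ≤ a⁻¹ * (a * ∫ t in (0:ℝ)..a, t * κ t ^ 2) := by
            exact mul_le_mul_of_nonneg_left h1 (inv_nonneg.2 ha.1.le)
      _ = ∫ t in (0:ℝ)..a, t * κ t ^ 2 := by
            rw [← mul_assoc, inv_mul_cancel₀ ha.1.ne', one_mul]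
    have hK1nn : (0:ℝ) ≤ K 1 :=
      intervalIntegral.integral_nonneg zero_le_one (fun u hu => by positivity)
    have hsplitϱ : (∫ t in (0:ℝ)..a, t * κ t ^ 2) + (∫ s in a..1, s * κ s ^ 2) = ϱ := by
      rw [hϱdef]
      apply intervalIntegral.integral_add_adjacent_intervals
        (((continuousOn_id.mul (hκc.pow 2)).mono
          (Set.Icc_subset_Icc le_rfl ha.2)).intervalIntegrable_of_Icc ha.1.le)
        hintκa1
    have hρleϱ : (∫ s in a..1, s⁻¹ * s⁻¹ * K s) ≤ ϱ := by
      have : (∫ s in a..1, s⁻¹ * s⁻¹ * K s)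
          = (∫ s in a..1, s * κ s ^ 2) - K 1 + a⁻¹ * K a := by
        rw [inv_one, one_mul] at hsplitP; linarith
      rw [this]
      linarith
    have hJa : 0 < J a := hJpos a ha
    have hlog : Real.log (J 1) ≤ ϱ + Real.log (J a / a) := by
      rw [Real.log_div hJa.ne' ha.1.ne']
      have := hmono1.trans hρleϱ
      rw [hLftc] at this
      simp only [Real.log_one] at this
      linarith
    have hexp := Real.exp_le_exp.2 hlog
    rw [Real.exp_add, Real.exp_log hJ1pos, Real.exp_log (div_pos hJa ha.1)] at hexp
    rw [Real.exp_neg, inv_mul_le_iff₀ (Real.exp_pos ϱ)]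
    exact hexp
  -- Part 5: corner estimate
  have hϱnn : 0 ≤ ϱ :=
    intervalIntegral.integral_nonneg zero_le_one (fun u hu => mul_nonneg hu.1 (sq_nonneg _))
  have hJle : ∀ t ∈ Set.Icc (0:ℝ) 1, J t ≤ J 1 := by
    intro t ht
    rcases eq_or_lt_of_le ht.1 with h0 | h0
    · rw [← h0, hJ0]; exact hJ1pos.le
    · have h := hgmono t 1 h0 ht.2 le_rfl
      rw [div_one] at h
      calc J t = J t / t * t := by field_simp
      _ ≤ J 1 * 1 := mul_le_mul h ht.2 h0.le hJ1pos.le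
      _ = J 1 := mul_one _
  have hJ1lb : 1 / (1 + ϱ) ≤ J 1 := by
    have hW1 : W 1 = 1 - J 1 := by simp [hWdef, hJ'1]
    have h2 : W 1 ≤ J 1 * ϱ := by
      rw [hWftc 1 ⟨zero_lt_one, le_rfl⟩]
      calc (∫ t in (0:ℝ)..1, t * (κ t ^ 2 * J t))
          ≤ ∫ t in (0:ℝ)..1, J 1 * (t * κ t ^ 2) := by
            apply integral_mono_on zero_le_one
              (hcontWint.intervalIntegrable_of_Icc zero_le_one)
              ((continuousOn_const.mul
                (continuousOn_id.mul (hκc.pow 2))).intervalIntegrable_of_Icc zero_le_one)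
            intro t ht
            calc t * (κ t ^ 2 * J t) ≤ t * (κ t ^ 2 * J 1) := by
                  apply mul_le_mul_of_nonneg_left _ ht.1
                  exact mul_le_mul_of_nonneg_left (hJle t ht) (sq_nonneg _)
            _ = J 1 * (t * κ t ^ 2) := by ring
      _ = J 1 * ϱ := by rw [intervalIntegral.integral_const_mul, hϱdef]
    have hpos : (0:ℝ) < 1 + ϱ := by linarith
    rw [div_le_iff₀ hpos]
    nlinarith
  -- Part 6: the limit
  have hslope : Filter.Tendsto (fun s => J s / s) (nhdsWithin 0 (Set.Ioc (0:ℝ) 1)) (nhds (J' 0)) := by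
    have h := hd1 0 ⟨le_rfl, zero_le_one⟩
    rw [hasDerivWithinAt_iff_tendsto_slope] at h
    have hset : Set.Icc (0:ℝ) 1 \ {0} = Set.Ioc 0 1 := by
      ext x
      constructor
      · rintro ⟨⟨h1, h2⟩, h3⟩
        exact ⟨lt_of_le_of_ne h1 (Ne.symm (by simpa using h3)), h2⟩
      · rintro ⟨h1, h2⟩
        exact ⟨⟨h1.le, h2⟩, by simp [h1.ne']⟩
    rw [hset] at h
    exact h.congr (fun s => by rw [slope_def_field, hJ0, sub_zero, sub_zero])
  haveI : (nhdsWithin (0:ℝ) (Set.Ioc (0:ℝ) 1)).NeBot := by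
    apply mem_closure_iff_nhdsWithin_neBot.1
    rw [closure_Ioc (zero_ne_one)]
    exact ⟨le_rfl, zero_le_one⟩
  have hfinal : Real.exp (-ϱ) * J 1 ≤ J' 0 :=
    ge_of_tendsto hslope (Filter.eventually_of_mem self_mem_nhdsWithin (fun s hs => key s hs))
  calc Real.exp (-ϱ) / (1 + ϱ) = Real.exp (-ϱ) * (1 / (1 + ϱ)) := by ring
  _ ≤ Real.exp (-ϱ) * J 1 := mul_le_mul_of_nonneg_left hJ1lb (Real.exp_pos _).le
  _ ≤ J' 0 := hfinal
end

section
/- Let n ≥ 1 and suppose a chain configuration satisfies αᵢ = ⟨∇₊ηᵢ, ∇₊η_{i+1}⟩ > 0 for all 1 ≤ i ≤ n−1, with |∇₊ηᵢ| = 1 for all i. Define β_n = 1, βᵢ = 2 − αᵢ²/β_{i+1}, p_{ij} = ∏_{m=i}^{j-1} (α_m/β_{m+1}), and G_{kj} = (1/n) ∑_{i=1}^{min{j,k}} p_{ij} p_{ik}/βᵢ. Then G_{kj} > 0 for all 1 ≤ j, k ≤ n. -/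
theorem stmt_15 (n d : ℕ) (hn : 1 ≤ n)
    (v : ℕ → EuclideanSpace ℝ (Fin d))
    (hv : ∀ i, 1 ≤ i → i ≤ n → ‖v i‖ = 1)
    (α : ℕ → ℝ)
    (hα : ∀ i, α i = (inner ℝ (v i) (v (i + 1)) : ℝ))
    (hαpos : ∀ i, 1 ≤ i → i ≤ n - 1 → 0 < α i)
    (β : ℕ → ℝ) (hβn : β n = 1)
    (hβ : ∀ i, 1 ≤ i → i ≤ n - 1 → β i = 2 - (α i)^2 / β (i + 1))
    (p : ℕ → ℕ → ℝ)
    (hp : ∀ i j, p i j = ∏ m ∈ Finset.Ico i j, α m / β (m + 1))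
    (G : ℕ → ℕ → ℝ)
    (hG : ∀ k j, G k j = (1 / (n : ℝ)) * ∑ i ∈ Finset.Icc 1 (min j k), p i j * p i k / β i) :
    ∀ j k, 1 ≤ j → j ≤ n → 1 ≤ k → k ≤ n → 0 < G k j := by
  have hβge : ∀ m i, i + m = n → 1 ≤ i → 1 ≤ β i := by
    intro m
    induction m with
    | zero =>
      intro i h hi
      have : i = n := by omega
      subst this; rw [hβn]
    | succ m ih =>
      intro i h hi
      have hin : i ≤ n - 1 := by omega
      have hβi1 : 1 ≤ β (i + 1) := ih (i + 1) (by omega) (by omega)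
      have hα1 : (α i) ^ 2 ≤ 1 := by
        rw [hα i]
        have h2 := abs_real_inner_le_norm (v i) (v (i + 1))
        rw [hv i hi (by omega), hv (i + 1) (by omega) (by omega)] at h2
        nlinarith [sq_abs ((inner ℝ (v i) (v (i + 1)) : ℝ)),
          abs_nonneg ((inner ℝ (v i) (v (i + 1)) : ℝ))]
      rw [hβ i hi hin]
      have hβpos : (0 : ℝ) < β (i + 1) := by linarith
      have hd : (α i) ^ 2 / β (i + 1) ≤ 1 := by
        rw [div_le_one hβpos]; linarith
      linarith
  have hβpos : ∀ i, 1 ≤ i → i ≤ n → 0 < β i := by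
    intro i h1 h2
    have := hβge (n - i) i (by omega) h1
    linarith
  have hppos : ∀ i j, 1 ≤ i → j ≤ n → 0 < p i j := by
    intro i j h1 h2
    rw [hp]
    apply Finset.prod_pos
    intro m hm
    rw [Finset.mem_Ico] at hm
    exact div_pos (hαpos m (by omega) (by omega)) (hβpos (m + 1) (by omega) (by omega))
  intro j k hj1 hj hk1 hk
  rw [hG]
  apply mul_pos (by positivity)
  apply Finset.sum_pos
  · intro i hi
    rw [Finset.mem_Icc] at hi
    exact div_pos (mul_pos (hppos i j hi.1 hj) (hppos i k hi.1 hk))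
      (hβpos i hi.1 (by omega))
  · exact ⟨1, Finset.mem_Icc.mpr ⟨le_refl 1, le_min hj1 hk1⟩⟩
end
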